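/- (Linear convergence for uniformly monotone CVI) Suppose the one-step inequality (1/2)‖v_t - x*‖² - (1/2)‖v̂_{t+1} - x*‖² ≥ b_{t+1} + a_{t+1}σ‖x_{t+1} - x*‖^{p+2} holds with a_{t+1} ≥ γ̂·g^{-p/(p+1)}, b_{t+1} ≥ (1/2)γ̂²·g^{2/(p+1)} where g = ‖V_ψ(x_{t+1})‖* > 0, σ > 0, γ̂ > 0. Define α = (p+2)·γ̂·(γ̂/p)^{p/(p+2)}·σ^{2/(p+2)} and v_{t+1} = (v̂_{t+1} + α·x_{t+1})/(1+α). Then ‖v_{t+1} - x*‖² ≤ ‖v_t - x*‖²/(1+α), and hence ‖v_t - x*‖ ≤ (1+α)^{-t/2}‖x_0 - x*‖. -/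

import Mathlib

open RealInnerProductSpace Real

lemma amgm_key (p : ℕ) (hp : 1 ≤ p) (σ γ r u : ℝ) (hσ : 0 < σ) (hγ : 0 < γ)
    (hr : 0 ≤ r) (hu : 0 < u) :
    ((p : ℝ) + 2) * γ * (γ / (p : ℝ)) ^ ((p : ℝ)/((p : ℝ) + 2)) *
      σ ^ ((2 : ℝ)/((p : ℝ) + 2)) / 2 * r ^ 2 ≤
    (1/2) * γ^2 * u^2 + γ * σ * r ^ (p + 2) / u ^ p := by
  have hp0 : (0:ℝ) < (p:ℝ) := by exact_mod_cast hp
  have hp2 : (0:ℝ) < (p:ℝ) + 2 := by linarith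
  rcases eq_or_lt_of_le hr with h0 | hr0
  · rw [← h0]
    have : (0:ℝ) ^ (p+2) = 0 := by exact zero_pow (by omega)
    rw [this]
    have h1 : (0:ℝ)^2 = 0 := by norm_num
    rw [h1, mul_zero]
    positivity
  · set w1 : ℝ := (p:ℝ)/((p:ℝ)+2) with hw1
    set w2 : ℝ := (2:ℝ)/((p:ℝ)+2) with hw2
    set A : ℝ := ((p:ℝ)+2)/(2*(p:ℝ)) * (γ^2 * u^2) with hA
    set B : ℝ := ((p:ℝ)+2)/2 * (γ * σ * r^(p+2) / u^p) with hB
    have hApos : 0 < A := by positivity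
    have hBpos : 0 < B := by positivity
    have hwsum : w1 + w2 = 1 := by rw [hw1, hw2]; field_simp
    have key := Real.geom_mean_le_arith_mean2_weighted
      (by positivity : (0:ℝ) ≤ w1) (by positivity : (0:ℝ) ≤ w2)
      hApos.le hBpos.le hwsum
    have h1 : w1*A + w2*B = (1/2)*γ^2*u^2 + γ*σ*r^(p+2)/u^p := by
      rw [hw1, hw2, hA, hB]; field_simp
    -- show the target LHS equals A^w1 * B^w2
    set L : ℝ := ((p : ℝ) + 2) * γ * (γ / (p : ℝ)) ^ w1 * σ ^ w2 / 2 * r ^ 2 with hL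
    have hLpos : 0 < L := by
      have : (0:ℝ) < (γ/(p:ℝ)) ^ w1 := rpow_pos_of_pos (by positivity) _
      have h2 : (0:ℝ) < σ ^ w2 := rpow_pos_of_pos hσ _
      positivity
    have hRpos : 0 < A ^ w1 * B ^ w2 :=
      mul_pos (rpow_pos_of_pos hApos _) (rpow_pos_of_pos hBpos _)
    have epow : ∀ (c : ℝ) (w : ℝ) (n : ℕ), 0 ≤ c → w * (p+2 : ℕ) = (n:ℝ) →
        (c ^ w) ^ ((p+2 : ℕ)) = c ^ n := by
      intro c w n hc hwn
      rw [← Real.rpow_natCast (c ^ w) (p+2), ← Real.rpow_mul hc, hwn, Real.rpow_natCast]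
    have hcast : ((p+2:ℕ):ℝ) = (p:ℝ) + 2 := by push_cast; ring
    have e1 : ((γ/(p:ℝ)) ^ w1) ^ (p+2) = (γ/(p:ℝ))^p :=
      epow _ _ _ (by positivity) (by rw [hw1, hcast]; field_simp)
    have e2 : (σ ^ w2) ^ (p+2) = σ^2 :=
      epow _ _ _ hσ.le (by rw [hw2, hcast]; field_simp; norm_num)
    have e3 : (A ^ w1) ^ (p+2) = A^p :=
      epow _ _ _ hApos.le (by rw [hw1, hcast]; field_simp)
    have e4 : (B ^ w2) ^ (p+2) = B^2 :=
      epow _ _ _ hBpos.le (by rw [hw2, hcast]; field_simp; norm_num)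
    have hR : (A ^ w1 * B ^ w2) ^ (p+2) = A^p * B^2 := by rw [mul_pow, e3, e4]
    have heqpow : L ^ (p+2) = (A ^ w1 * B ^ w2) ^ (p+2) := by
      rw [hR]
      have hup : u ^ p ≠ 0 := pow_ne_zero _ hu.ne'
      have hpne : (p:ℝ) ≠ 0 := hp0.ne'
      obtain ⟨q, hq⟩ : ∃ q : ℝ, q = (p:ℝ)+2 := ⟨_, rfl⟩
      calc L ^ (p+2)
          = (((p:ℝ)+2)*γ/2)^(p+2) * (((γ/(p:ℝ))^w1)^(p+2)) * ((σ^w2)^(p+2))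
            * (r^2)^(p+2) := by
            rw [hL, ← hq]
            ring
        _ = (((p:ℝ)+2)*γ/2)^(p+2) * ((γ/(p:ℝ))^p) * σ^2 * (r^2)^(p+2) := by
            rw [e1, e2]
        _ = A^p * B^2 := by
            rw [hA, hB, ← hq]
            field_simp
            ring
    have heq : L = A ^ w1 * B ^ w2 := by
      have := pow_left_strictMonoOn₀ (M₀ := ℝ) (n := p+2) (by omega)
      exact this.injOn (Set.mem_setOf.mpr hLpos.le) (Set.mem_setOf.mpr hRpos.le) heqpow
    calc L = A ^ w1 * B ^ w2 := heq
      _ ≤ w1*A + w2*B := key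
      _ = _ := h1

theorem stmt_19 {E : Type*} [NormedAddCommGroup E] [InnerProductSpace ℝ E]
    (p : ℕ) (hp : 1 ≤ p)
    (σ γ : ℝ) (hσ : 0 < σ) (hγ : 0 < γ)
    (v vhat x : ℕ → E) (xs : E) (a b g : ℕ → ℝ)
    (hg : ∀ t, 0 < g (t+1))
    (ha : ∀ t, a (t+1) ≥ γ * g (t+1) ^ (-((p : ℝ)/((p : ℝ) + 1))))
    (hb : ∀ t, b (t+1) ≥ (1/2) * γ^2 * g (t+1) ^ ((2 : ℝ)/((p : ℝ) + 1)))
    (hstep : ∀ t, (1/2) * ‖v t - xs‖^2 - (1/2) * ‖vhat (t+1) - xs‖^2 ≥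
        b (t+1) + a (t+1) * σ * ‖x (t+1) - xs‖ ^ (p + 2))
    (α : ℝ)
    (hα : α = ((p : ℝ) + 2) * γ * (γ / (p : ℝ)) ^ ((p : ℝ)/((p : ℝ) + 2)) *
        σ ^ ((2 : ℝ)/((p : ℝ) + 2)))
    (hupd : ∀ t, v (t+1) = (1/(1 + α)) • (vhat (t+1) + α • x (t+1))) :
    (∀ t, ‖v (t+1) - xs‖^2 ≤ ‖v t - xs‖^2 / (1 + α)) ∧
      ∀ t, ‖v t - xs‖ ≤ (1 + α) ^ (-((t : ℝ)/2)) * ‖v 0 - xs‖ := by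
  have hp0 : (0:ℝ) < (p:ℝ) := by exact_mod_cast hp
  have hp1 : (0:ℝ) < (p:ℝ) + 1 := by linarith
  have hαpos : 0 < α := by
    rw [hα]
    have h1 : (0:ℝ) < (γ/(p:ℝ)) ^ ((p:ℝ)/((p:ℝ)+2)) := rpow_pos_of_pos (by positivity) _
    have h2 : (0:ℝ) < σ ^ ((2:ℝ)/((p:ℝ)+2)) := rpow_pos_of_pos hσ _
    positivity
  have h1α : (0:ℝ) < 1 + α := by linarith
  -- Step A
  have stepA : ∀ t, ‖vhat (t+1) - xs‖^2 + α * ‖x (t+1) - xs‖^2 ≤ ‖v t - xs‖^2 := by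
    intro t
    set r := ‖x (t+1) - xs‖ with hrdef
    have hr : 0 ≤ r := norm_nonneg _
    set u : ℝ := g (t+1) ^ ((1:ℝ)/((p:ℝ)+1)) with hu
    have hupos : 0 < u := rpow_pos_of_pos (hg t) _
    have hu2 : u^2 = g (t+1) ^ ((2:ℝ)/((p:ℝ)+1)) := by
      rw [hu, ← Real.rpow_natCast (g (t+1) ^ ((1:ℝ)/((p:ℝ)+1))) 2, ← Real.rpow_mul (hg t).le]
      congr 1
      push_cast
      ring
    have hup : (u:ℝ)^p = g (t+1) ^ ((p:ℝ)/((p:ℝ)+1)) := by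
      rw [hu, ← Real.rpow_natCast (g (t+1) ^ ((1:ℝ)/((p:ℝ)+1))) p, ← Real.rpow_mul (hg t).le]
      congr 1
      field_simp
    have hginv : g (t+1) ^ (-((p : ℝ)/((p : ℝ) + 1))) = 1 / u^p := by
      rw [Real.rpow_neg (hg t).le, ← hup, one_div]
    -- lower bound b + aσr^{p+2} ≥ (α/2) r²
    have hamgm := amgm_key p hp σ γ r u hσ hγ hr hupos
    have hbnd : α / 2 * r^2 ≤ b (t+1) + a (t+1) * σ * r ^ (p+2) := by
      have hb' : (1/2)*γ^2*u^2 ≤ b (t+1) := by rw [hu2]; exact hb t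
      have ha' : γ * σ * r^(p+2) / u^p ≤ a (t+1) * σ * r^(p+2) := by
        have h1 : γ * (1/u^p) ≤ a (t+1) := by rw [← hginv]; exact ha t
        have h2 : (0:ℝ) ≤ σ * r^(p+2) := by positivity
        calc γ * σ * r^(p+2) / u^p = (γ * (1/u^p)) * (σ * r^(p+2)) := by ring
          _ ≤ a (t+1) * (σ * r^(p+2)) := mul_le_mul_of_nonneg_right h1 h2
          _ = a (t+1) * σ * r^(p+2) := by ring
      calc α/2 * r^2 = ((p : ℝ) + 2) * γ * (γ / (p : ℝ)) ^ ((p : ℝ)/((p : ℝ) + 2)) *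
            σ ^ ((2 : ℝ)/((p : ℝ) + 2)) / 2 * r ^ 2 := by rw [hα]
        _ ≤ (1/2)*γ^2*u^2 + γ * σ * r^(p+2) / u^p := hamgm
        _ ≤ b (t+1) + a (t+1) * σ * r^(p+2) := add_le_add hb' ha'
    have := hstep t
    nlinarith [this, hbnd]
  -- Step B: convexity
  have stepB : ∀ t, ‖v (t+1) - xs‖^2 ≤
      (‖vhat (t+1) - xs‖^2 + α * ‖x (t+1) - xs‖^2) / (1 + α) := by
    intro t
    have key : (1+α) • (v (t+1) - xs) = (vhat (t+1) - xs) + α • (x (t+1) - xs) := by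
      rw [hupd t, smul_sub, smul_smul]
      have h1 : (1+α) * (1/(1+α)) = 1 := by field_simp
      rw [h1, one_smul]
      module
    have hnorm : (1+α) * ‖v (t+1) - xs‖ ≤ ‖vhat (t+1) - xs‖ + α * ‖x (t+1) - xs‖ := by
      have h2 : ‖(1+α) • (v (t+1) - xs)‖ = (1+α) * ‖v (t+1) - xs‖ := by
        rw [norm_smul, Real.norm_eq_abs, abs_of_pos h1α]
      rw [← h2, key]
      calc ‖(vhat (t+1) - xs) + α • (x (t+1) - xs)‖
          ≤ ‖vhat (t+1) - xs‖ + ‖α • (x (t+1) - xs)‖ := norm_add_le _ _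
        _ = ‖vhat (t+1) - xs‖ + α * ‖x (t+1) - xs‖ := by
            rw [norm_smul, Real.norm_eq_abs, abs_of_pos hαpos]
    set c := ‖v (t+1) - xs‖
    set aa := ‖vhat (t+1) - xs‖
    set bb := ‖x (t+1) - xs‖
    have hc : 0 ≤ c := norm_nonneg _
    have haa : 0 ≤ aa := norm_nonneg _
    have hbb : 0 ≤ bb := norm_nonneg _
    rw [le_div_iff₀ h1α]
    nlinarith [sq_nonneg (aa - bb), mul_le_mul hnorm hnorm (by positivity) (by positivity)]
  have part1 : ∀ t, ‖v (t+1) - xs‖^2 ≤ ‖v t - xs‖^2 / (1 + α) := by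
    intro t
    calc ‖v (t+1) - xs‖^2 ≤ (‖vhat (t+1) - xs‖^2 + α * ‖x (t+1) - xs‖^2) / (1 + α) := stepB t
      _ ≤ ‖v t - xs‖^2 / (1 + α) := by
          gcongr
          exact stepA t
  refine ⟨part1, ?_⟩
  have hsq : ∀ t, ‖v t - xs‖^2 ≤ ‖v 0 - xs‖^2 / (1+α)^t := by
    intro t
    induction t with
    | zero => simp
    | succ n ih =>
      calc ‖v (n+1) - xs‖^2 ≤ ‖v n - xs‖^2 / (1+α) := part1 n
        _ ≤ (‖v 0 - xs‖^2 / (1+α)^n) / (1+α) := by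
            gcongr
        _ = ‖v 0 - xs‖^2 / (1+α)^(n+1) := by
            rw [div_div, ← pow_succ]
  intro t
  set β := (1+α) ^ (-((t : ℝ)/2)) with hβ
  have hβpos : 0 < β := rpow_pos_of_pos h1α _
  have hβ2 : β^2 = 1/(1+α)^t := by
    rw [hβ, ← Real.rpow_natCast ((1+α) ^ (-((t : ℝ)/2))) 2, ← Real.rpow_mul h1α.le]
    have : -((t:ℝ)/2) * (2:ℕ) = -(t:ℝ) := by push_cast; ring
    rw [this, Real.rpow_neg h1α.le, Real.rpow_natCast, one_div]
  have hfin : ‖v t - xs‖^2 ≤ (β * ‖v 0 - xs‖)^2 := by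
    rw [mul_pow, hβ2]
    calc ‖v t - xs‖^2 ≤ ‖v 0 - xs‖^2 / (1+α)^t := hsq t
      _ = 1/(1+α)^t * ‖v 0 - xs‖^2 := by ring
  have := Real.sqrt_le_sqrt hfin
  rwa [Real.sqrt_sq (norm_nonneg _), Real.sqrt_sq (by positivity)] at this
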